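/- The ℝ-linear map im ℍ ⊕ im ℍ → Λ²ℍ sending (h, h′) to Λ⁺(h) + Λ⁻(h′) is injective and its image is all of Λ²ℍ; that is, it is an ℝ-linear isomorphism onto the degree-2 component of the exterior algebra of the 4-dimensional real vector space ℍ. -/

import Mathlib

open Quaternion

namespace QuaternionExterior

/-- The purely imaginary quaternions, as a real submodule of `ℍ`. -/
def imH : Submodule ℝ ℍ where
  carrier := {q | q.re = 0}
  add_mem' := by
    intro a b ha hb
    simp only [Set.mem_setOf_eq] at *
    simp [ha, hb]
  zero_mem' := by simp
  smul_mem' := by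
    intro c a ha
    simp only [Set.mem_setOf_eq] at *
    simp [ha]

/-- The quaternion `i`. -/
def qI : ℍ := ⟨0, 1, 0, 0⟩
/-- The quaternion `j`. -/
def qJ : ℍ := ⟨0, 0, 1, 0⟩
/-- The quaternion `k`. -/
def qK : ℍ := ⟨0, 0, 0, 1⟩

open ExteriorAlgebra

/-- `Λ⁺(h) = 1∧h + i∧(hi) + j∧(hj) + k∧(hk)` in the exterior algebra of `ℍ`. -/
noncomputable def Lplus (h : ℍ) : ExteriorAlgebra ℝ ℍ :=
  ι ℝ (1 : ℍ) * ι ℝ h + ι ℝ qI * ι ℝ (h * qI) + ι ℝ qJ * ι ℝ (h * qJ) + ι ℝ qK * ι ℝ (h * qK)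

/-- `Λ⁻(h) = 1∧h + i∧(ih) + j∧(jh) + k∧(kh)` in the exterior algebra of `ℍ`. -/
noncomputable def Lminus (h : ℍ) : ExteriorAlgebra ℝ ℍ :=
  ι ℝ (1 : ℍ) * ι ℝ h + ι ℝ qI * ι ℝ (qI * h) + ι ℝ qJ * ι ℝ (qJ * h) + ι ℝ qK * ι ℝ (qK * h)

@[simp] lemma qI_re : qI.re = 0 := rfl
@[simp] lemma qI_imI : qI.imI = 1 := rfl
@[simp] lemma qI_imJ : qI.imJ = 0 := rfl
@[simp] lemma qI_imK : qI.imK = 0 := rfl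
@[simp] lemma qJ_re : qJ.re = 0 := rfl
@[simp] lemma qJ_imI : qJ.imI = 0 := rfl
@[simp] lemma qJ_imJ : qJ.imJ = 1 := rfl
@[simp] lemma qJ_imK : qJ.imK = 0 := rfl
@[simp] lemma qK_re : qK.re = 0 := rfl
@[simp] lemma qK_imI : qK.imI = 0 := rfl
@[simp] lemma qK_imJ : qK.imJ = 0 := rfl
@[simp] lemma qK_imK : qK.imK = 1 := rfl

/-! ### Auxiliary material -/

/-- The antisymmetric bilinear map `(u,v) ↦ (u v̄ - v ū, ū v - v̄ u)`. -/
noncomputable def b2 : ℍ →ₗ[ℝ] ℍ →ₗ[ℝ] (ℍ × ℍ) :=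
  LinearMap.mk₂ ℝ (fun u v => (u * star v - v * star u, star u * v - star v * u))
    (by intros m n v; simp only [star_add, add_mul, mul_add, Prod.mk_add_mk, Prod.mk.injEq]
        constructor <;> abel)
    (by intros c m v; simp only [Quaternion.star_smul, smul_mul_assoc, mul_smul_comm,
          Prod.smul_mk, smul_sub, Prod.mk.injEq])
    (by intros m n v; simp only [star_add, add_mul, mul_add, Prod.mk_add_mk, Prod.mk.injEq]
        constructor <;> abel)
    (by intros c m v; simp only [Quaternion.star_smul, smul_mul_assoc, mul_smul_comm,
          Prod.smul_mk, smul_sub, Prod.mk.injEq])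

lemma b2_self (x : ℍ) : b2 x x = 0 := by
  simp [b2, Prod.ext_iff]

noncomputable def Bmulti : MultilinearMap ℝ (fun _ : Fin 2 => ℍ) (ℍ × ℍ) where
  toFun v := b2 (v 0) (v 1)
  map_update_add' := by
    intro dec v i x y
    fin_cases i <;> simp [Function.update, Fin.ext_iff]
  map_update_smul' := by
    intro dec v i c x
    fin_cases i <;> simp [Function.update, Fin.ext_iff]

noncomputable def Balt : ℍ [⋀^Fin 2]→ₗ[ℝ] (ℍ × ℍ) :=
  { Bmulti with
    map_eq_zero_of_eq' := by
      intro v i j hv hij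
      have h01 : v 0 = v 1 := by
        fin_cases i <;> fin_cases j <;> simp_all
      show b2 (v 0) (v 1) = 0
      rw [h01, b2_self] }

noncomputable def fam : ∀ i : ℕ, ℍ [⋀^Fin i]→ₗ[ℝ] (ℍ × ℍ)
  | 2 => Balt
  | _ => 0

/-- The linear "inverse-detecting" map on the exterior algebra. -/
noncomputable def G : ExteriorAlgebra ℝ ℍ →ₗ[ℝ] (ℍ × ℍ) :=
  liftAlternating fam

lemma G_wedge (a b : ℍ) :
    G (ι ℝ a * ι ℝ b) = (a * star b - b * star a, star a * b - star b * a) := by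
  rw [G, liftAlternating_ι_mul, liftAlternating_ι]
  show Balt ![a, b] = _
  show b2 (![a,b] 0) (![a,b] 1) = _
  simp [b2]

lemma Lplus_add (a b : ℍ) : Lplus (a + b) = Lplus a + Lplus b := by
  simp only [Lplus, add_mul, map_add, mul_add]
  abel

lemma Lplus_smul (c : ℝ) (a : ℍ) : Lplus (c • a) = c • Lplus a := by
  simp only [Lplus, smul_mul_assoc, map_smul, mul_smul_comm, smul_add]

lemma Lminus_add (a b : ℍ) : Lminus (a + b) = Lminus a + Lminus b := by
  simp only [Lminus, add_mul, map_add, mul_add]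
  abel

lemma Lminus_smul (c : ℝ) (a : ℍ) : Lminus (c • a) = c • Lminus a := by
  simp only [Lminus, smul_mul_assoc, map_smul, mul_smul_comm, smul_add]

/-- The linear map `(h, h') ↦ Λ⁺(h) + Λ⁻(h')`. -/
noncomputable def F : (imH × imH) →ₗ[ℝ] ExteriorAlgebra ℝ ℍ where
  toFun p := Lplus (p.1 : ℍ) + Lminus (p.2 : ℍ)
  map_add' p q := by
    simp only [Prod.fst_add, Prod.snd_add, Submodule.coe_add, Lplus_add, Lminus_add]
    abel
  map_smul' c p := by
    simp only [Prod.smul_fst, Prod.smul_snd, SetLike.val_smul, Lplus_smul, Lminus_smul,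
      RingHom.id_apply, smul_add]

lemma F_apply (p : imH × imH) : F p = Lplus (p.1 : ℍ) + Lminus (p.2 : ℍ) := rfl

set_option maxHeartbeats 1200000 in
lemma G_Lplus (h : ℍ) (hre : h.re = 0) : G (Lplus h) = ((-8 : ℝ) • h, 0) := by
  simp only [Lplus, map_add, G_wedge, Prod.mk_add_mk]
  refine Prod.ext ?_ ?_ <;> · ext <;> simp [hre] <;> ring

set_option maxHeartbeats 1200000 in
lemma G_Lminus (h : ℍ) (hre : h.re = 0) : G (Lminus h) = (0, (8 : ℝ) • h) := by
  simp only [Lminus, map_add, G_wedge, Prod.mk_add_mk]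
  refine Prod.ext ?_ ?_ <;> · ext <;> simp [hre] <;> ring

lemma F_injective : Function.Injective F := by
  intro p q hpq
  have h1 := congrArg G hpq
  simp only [F_apply, map_add, G_Lplus _ p.1.2, G_Lplus _ q.1.2,
    G_Lminus _ p.2.2, G_Lminus _ q.2.2, Prod.mk_add_mk, add_zero, zero_add,
    Prod.mk.injEq] at h1
  have h2 : (p.1 : ℍ) = q.1 := by
    have := h1.1
    have h8 : ((-8 : ℝ)) ≠ 0 := by norm_num
    exact smul_right_injective ℍ h8 this
  have h3 : (p.2 : ℍ) = q.2 := by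
    have := h1.2
    have h8 : ((8 : ℝ)) ≠ 0 := by norm_num
    exact smul_right_injective ℍ h8 this
  exact Prod.ext (Subtype.ext h2) (Subtype.ext h3)

lemma F_mem_pow (p : imH × imH) :
    F p ∈ ((LinearMap.range (ι ℝ : ℍ →ₗ[ℝ] ExteriorAlgebra ℝ ℍ)) ^ 2 :
      Submodule ℝ (ExteriorAlgebra ℝ ℍ)) := by
  rw [pow_two]
  have hw : ∀ a b : ℍ, ι ℝ a * ι ℝ b ∈
      (LinearMap.range (ι ℝ : ℍ →ₗ[ℝ] ExteriorAlgebra ℝ ℍ)) *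
      (LinearMap.range (ι ℝ : ℍ →ₗ[ℝ] ExteriorAlgebra ℝ ℍ)) := fun a b =>
    Submodule.mul_mem_mul (LinearMap.mem_range_self _ _) (LinearMap.mem_range_self _ _)
  rw [F_apply, Lplus, Lminus]
  refine add_mem (add_mem (add_mem (add_mem ?_ ?_) ?_) ?_)
      (add_mem (add_mem (add_mem ?_ ?_) ?_) ?_) <;> apply hw

/-- `F`, codomain-restricted to the degree-2 component. -/
noncomputable def F' : (imH × imH) →ₗ[ℝ]
    ((LinearMap.range (ι ℝ : ℍ →ₗ[ℝ] ExteriorAlgebra ℝ ℍ)) ^ 2 :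
      Submodule ℝ (ExteriorAlgebra ℝ ℍ)) :=
  F.codRestrict _ F_mem_pow

-- quaternion multiplication table
lemma qII : qI * qI = -1 := by ext <;> simp
lemma qJJ : qJ * qJ = -1 := by ext <;> simp
lemma qKK : qK * qK = -1 := by ext <;> simp
lemma qIJ : qI * qJ = qK := by ext <;> simp
lemma qJI : qJ * qI = -qK := by ext <;> simp
lemma qIK : qI * qK = -qJ := by ext <;> simp
lemma qKI : qK * qI = qJ := by ext <;> simp
lemma qJK : qJ * qK = qI := by ext <;> simp
lemma qKJ : qK * qJ = -qI := by ext <;> simp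

lemma wedge_swap (a b : ℍ) : ι ℝ b * ι ℝ a = -(ι ℝ a * ι ℝ b) :=
  eq_neg_of_add_eq_zero_left (by rw [add_comm]; exact ι_add_mul_swap a b)

def eI : imH := ⟨qI, rfl⟩
def eJ : imH := ⟨qJ, rfl⟩
def eK : imH := ⟨qK, rfl⟩

lemma F_II : F (eI, eI) = (4 : ℝ) • (ι ℝ (1 : ℍ) * ι ℝ qI) := by
  rw [F_apply]
  show Lplus qI + Lminus qI = _
  rw [Lplus, Lminus, qII, qIJ, qIK, qJI, qKI]
  simp only [map_neg, map_one, mul_neg, neg_mul, wedge_swap qI (1 : ℍ)]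
  rw [wedge_swap qK qJ]
  module

lemma F_ImI : F (eI, -eI) = (4 : ℝ) • (ι ℝ qJ * ι ℝ qK) := by
  rw [F_apply]
  show Lplus qI + Lminus (-qI) = _
  rw [show Lminus (-qI) = -Lminus qI from by
    rw [show -qI = (-1 : ℝ) • qI from by module, Lminus_smul]; module]
  rw [Lplus, Lminus, qII, qIJ, qIK, qJI, qKI]
  simp only [map_neg, map_one, mul_neg, neg_mul, wedge_swap qI (1 : ℍ)]
  rw [wedge_swap qK qJ]
  module

lemma F_JJ : F (eJ, eJ) = (4 : ℝ) • (ι ℝ (1 : ℍ) * ι ℝ qJ) := by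
  rw [F_apply]
  show Lplus qJ + Lminus qJ = _
  rw [Lplus, Lminus, qJJ, qJI, qJK, qIJ, qKJ]
  simp only [map_neg, map_one, mul_neg, neg_mul, wedge_swap qJ (1 : ℍ)]
  rw [wedge_swap qK qI]
  module

lemma F_mJJ : F (-eJ, eJ) = (4 : ℝ) • (ι ℝ qI * ι ℝ qK) := by
  rw [F_apply]
  show Lplus (-qJ) + Lminus qJ = _
  rw [show Lplus (-qJ) = -Lplus qJ from by
    rw [show -qJ = (-1 : ℝ) • qJ from by module, Lplus_smul]; module]
  rw [Lplus, Lminus, qJJ, qJI, qJK, qIJ, qKJ]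
  simp only [map_neg, map_one, mul_neg, neg_mul, wedge_swap qJ (1 : ℍ)]
  rw [wedge_swap qK qI]
  module

lemma F_KK : F (eK, eK) = (4 : ℝ) • (ι ℝ (1 : ℍ) * ι ℝ qK) := by
  rw [F_apply]
  show Lplus qK + Lminus qK = _
  rw [Lplus, Lminus, qKK, qKI, qKJ, qIK, qJK]
  simp only [map_neg, map_one, mul_neg, neg_mul, wedge_swap qK (1 : ℍ)]
  rw [wedge_swap qJ qI]
  module

lemma F_KmK : F (eK, -eK) = (4 : ℝ) • (ι ℝ qI * ι ℝ qJ) := by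
  rw [F_apply]
  show Lplus qK + Lminus (-qK) = _
  rw [show Lminus (-qK) = -Lminus qK from by
    rw [show -qK = (-1 : ℝ) • qK from by module, Lminus_smul]; module]
  rw [Lplus, Lminus, qKK, qKI, qKJ, qIK, qJK]
  simp only [map_neg, map_one, mul_neg, neg_mul, wedge_swap qK (1 : ℍ)]
  rw [wedge_swap qJ qI]
  module

lemma mem_of_eq (p : imH × imH) (w : ExteriorAlgebra ℝ ℍ)
    (h : F p = (4 : ℝ) • w) : w ∈ LinearMap.range F :=
  ⟨(4 : ℝ)⁻¹ • p, by rw [map_smul, h, smul_smul]; norm_num⟩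

lemma mem_1I : ι ℝ (1 : ℍ) * ι ℝ qI ∈ LinearMap.range F := mem_of_eq _ _ F_II
lemma mem_1J : ι ℝ (1 : ℍ) * ι ℝ qJ ∈ LinearMap.range F := mem_of_eq _ _ F_JJ
lemma mem_1K : ι ℝ (1 : ℍ) * ι ℝ qK ∈ LinearMap.range F := mem_of_eq _ _ F_KK
lemma mem_IJ : ι ℝ qI * ι ℝ qJ ∈ LinearMap.range F := mem_of_eq _ _ F_KmK
lemma mem_IK : ι ℝ qI * ι ℝ qK ∈ LinearMap.range F := mem_of_eq _ _ F_mJJ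
lemma mem_JK : ι ℝ qJ * ι ℝ qK ∈ LinearMap.range F := mem_of_eq _ _ F_ImI

lemma quat_decomp (x : ℍ) : x = x.re • 1 + x.imI • qI + x.imJ • qJ + x.imK • qK := by
  ext <;> simp

lemma wedge_mem (x y : ℍ) : ι ℝ x * ι ℝ y ∈ LinearMap.range F := by
  have hx : ι ℝ x = ι ℝ (x.re • 1 + x.imI • qI + x.imJ • qJ + x.imK • qK) := by
    conv_lhs => rw [quat_decomp x]
  have hy : ι ℝ y = ι ℝ (y.re • 1 + y.imI • qI + y.imJ • qJ + y.imK • qK) := by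
    conv_lhs => rw [quat_decomp y]
  rw [hx, hy]
  simp only [map_add, map_smul, add_mul, mul_add, smul_mul_assoc, mul_smul_comm, smul_smul,
    ι_sq_zero, smul_zero, mul_zero, zero_mul, smul_neg]
  simp only [wedge_swap (1:ℍ) qI, wedge_swap (1:ℍ) qJ, wedge_swap (1:ℍ) qK,
    wedge_swap qI qJ, wedge_swap qI qK, wedge_swap qJ qK, smul_neg, ι_sq_zero, smul_zero,
    smul_add, smul_smul, add_zero, zero_add]
  repeat' apply add_mem
  all_goals first
      | exact zero_mem _
      | exact Submodule.smul_mem _ _ mem_1I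
      | exact Submodule.smul_mem _ _ mem_1J
      | exact Submodule.smul_mem _ _ mem_1K
      | exact Submodule.smul_mem _ _ mem_IJ
      | exact Submodule.smul_mem _ _ mem_IK
      | exact Submodule.smul_mem _ _ mem_JK
      | exact neg_mem (Submodule.smul_mem _ _ mem_1I)
      | exact neg_mem (Submodule.smul_mem _ _ mem_1J)
      | exact neg_mem (Submodule.smul_mem _ _ mem_1K)
      | exact neg_mem (Submodule.smul_mem _ _ mem_IJ)
      | exact neg_mem (Submodule.smul_mem _ _ mem_IK)
      | exact neg_mem (Submodule.smul_mem _ _ mem_JK)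

lemma F'_surjective : Function.Surjective F' := by
  rintro ⟨w, hw⟩
  rw [pow_two] at hw
  have : w ∈ LinearMap.range F := by
    refine Submodule.mul_induction_on hw ?_ ?_
    · rintro m ⟨x, rfl⟩ n ⟨y, rfl⟩
      exact wedge_mem x y
    · intro a b ha hb
      exact add_mem ha hb
  obtain ⟨p, hp⟩ := this
  exact ⟨p, Subtype.ext hp⟩

lemma F'_injective : Function.Injective F' := by
  intro p q h
  exact F_injective (congrArg Subtype.val h)

/-- The map `(h, h′) ↦ Λ⁺(h) + Λ⁻(h′)` is an ℝ-linear isomorphism from `im ℍ ⊕ im ℍ`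
onto the degree-2 component `Λ²ℍ` of the exterior algebra of `ℍ`. -/
theorem lambda_equiv_degree_two :
    ∃ e : (imH × imH) ≃ₗ[ℝ]
        ((LinearMap.range (ι ℝ : ℍ →ₗ[ℝ] ExteriorAlgebra ℝ ℍ)) ^ 2 :
          Submodule ℝ (ExteriorAlgebra ℝ ℍ)),
      ∀ p : imH × imH, (e p : ExteriorAlgebra ℝ ℍ) = Lplus (p.1 : ℍ) + Lminus (p.2 : ℍ) := by
  refine ⟨LinearEquiv.ofBijective F' ⟨F'_injective, F'_surjective⟩, fun p => ?_⟩
  show (F' p : ExteriorAlgebra ℝ ℍ) = _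
  exact F_apply p

end QuaternionExterior
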